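/- Let T1 ∈ ℝ^{Nx×Nx}, T2 ∈ ℝ^{Ny×Ny}, define A = I_{Ny} ⊗ T1 + T2ᵀ ⊗ I_{Nx}, assume A is invertible, and let h_t ∈ ℝ. Set E1 = exp(h_t T1) and E2 = exp(h_t T2ᵀ). Let U_n and F_n be Nx×Ny real matrices with u_n = vec(U_n), f_n = vec(F_n), and let V_n be a solution of the Sylvester equation T1 V_n + V_n T2 = E1 F_n E2ᵀ − F_n. Then the exponential Euler step u_{n+1} = exp(h_t A) u_n + A^{−1}( exp(h_t A) f_n − f_n ) satisfies u_{n+1} = vec( E1 U_n E2ᵀ + V_n ). -/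

import Mathlib

open Matrix NormedSpace
open scoped Kronecker

/-- `vec` stacks the columns of an `Nx × Ny` matrix one after the other:
the component of `vec U` at index `(j, i)` is `U i j`. -/
def vec {Nx Ny : ℕ} (U : Matrix (Fin Nx) (Fin Ny) ℝ) : Fin Ny × Fin Nx → ℝ :=
  fun p => U p.2 p.1


section Aux

variable {Nx Ny : ℕ}

/-- right Kronecker multiplication as an AlgHom: `M ↦ 1 ⊗ₖ M`. -/
def kronRight (Ny Nx : ℕ) : Matrix (Fin Nx) (Fin Nx) ℝ →ₐ[ℝ]
    Matrix (Fin Ny × Fin Nx) (Fin Ny × Fin Nx) ℝ where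
  toFun M := (1 : Matrix (Fin Ny) (Fin Ny) ℝ) ⊗ₖ M
  map_one' := Matrix.one_kronecker_one
  map_mul' M N := by rw [← Matrix.mul_kronecker_mul, Matrix.one_mul]
  map_zero' := Matrix.kronecker_zero _
  map_add' M N := Matrix.kronecker_add _ _ _
  commutes' r := by
    simp [Algebra.algebraMap_eq_smul_one, Matrix.kronecker_smul, Matrix.one_kronecker_one]

/-- left Kronecker multiplication as an AlgHom: `M ↦ M ⊗ₖ 1`. -/
def kronLeft (Ny Nx : ℕ) : Matrix (Fin Ny) (Fin Ny) ℝ →ₐ[ℝ]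
    Matrix (Fin Ny × Fin Nx) (Fin Ny × Fin Nx) ℝ where
  toFun M := M ⊗ₖ (1 : Matrix (Fin Nx) (Fin Nx) ℝ)
  map_one' := Matrix.one_kronecker_one
  map_mul' M N := by rw [← Matrix.mul_kronecker_mul, Matrix.one_mul]
  map_zero' := Matrix.zero_kronecker _
  map_add' M N := Matrix.add_kronecker _ _ _
  commutes' r := by
    simp [Algebra.algebraMap_eq_smul_one, Matrix.smul_kronecker, Matrix.one_kronecker_one]

lemma exp_kronRight (M : Matrix (Fin Nx) (Fin Nx) ℝ) :
    exp ((1 : Matrix (Fin Ny) (Fin Ny) ℝ) ⊗ₖ M) = (1 : Matrix (Fin Ny) (Fin Ny) ℝ) ⊗ₖ exp M := by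
  letI : SeminormedRing (Matrix (Fin Nx) (Fin Nx) ℝ) := Matrix.linftyOpSemiNormedRing
  letI : NormedRing (Matrix (Fin Nx) (Fin Nx) ℝ) := Matrix.linftyOpNormedRing
  letI : NormedAlgebra ℝ (Matrix (Fin Nx) (Fin Nx) ℝ) := Matrix.linftyOpNormedAlgebra
  letI : NormedAlgebra ℚ (Matrix (Fin Nx) (Fin Nx) ℝ) := Matrix.linftyOpNormedAlgebra
  letI : SeminormedRing (Matrix (Fin Ny × Fin Nx) (Fin Ny × Fin Nx) ℝ) :=
    Matrix.linftyOpSemiNormedRing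
  letI : NormedRing (Matrix (Fin Ny × Fin Nx) (Fin Ny × Fin Nx) ℝ) := Matrix.linftyOpNormedRing
  letI : NormedAlgebra ℝ (Matrix (Fin Ny × Fin Nx) (Fin Ny × Fin Nx) ℝ) :=
    Matrix.linftyOpNormedAlgebra
  letI : NormedAlgebra ℚ (Matrix (Fin Ny × Fin Nx) (Fin Ny × Fin Nx) ℝ) :=
    Matrix.linftyOpNormedAlgebra
  exact (map_exp (kronRight Ny Nx)
    ((kronRight Ny Nx).toLinearMap.continuous_of_finiteDimensional) M).symm

lemma exp_kronLeft (M : Matrix (Fin Ny) (Fin Ny) ℝ) :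
    exp (M ⊗ₖ (1 : Matrix (Fin Nx) (Fin Nx) ℝ)) = exp M ⊗ₖ (1 : Matrix (Fin Nx) (Fin Nx) ℝ) := by
  letI : SeminormedRing (Matrix (Fin Ny) (Fin Ny) ℝ) := Matrix.linftyOpSemiNormedRing
  letI : NormedRing (Matrix (Fin Ny) (Fin Ny) ℝ) := Matrix.linftyOpNormedRing
  letI : NormedAlgebra ℝ (Matrix (Fin Ny) (Fin Ny) ℝ) := Matrix.linftyOpNormedAlgebra
  letI : NormedAlgebra ℚ (Matrix (Fin Ny) (Fin Ny) ℝ) := Matrix.linftyOpNormedAlgebra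
  letI : SeminormedRing (Matrix (Fin Ny × Fin Nx) (Fin Ny × Fin Nx) ℝ) :=
    Matrix.linftyOpSemiNormedRing
  letI : NormedRing (Matrix (Fin Ny × Fin Nx) (Fin Ny × Fin Nx) ℝ) := Matrix.linftyOpNormedRing
  letI : NormedAlgebra ℝ (Matrix (Fin Ny × Fin Nx) (Fin Ny × Fin Nx) ℝ) :=
    Matrix.linftyOpNormedAlgebra
  letI : NormedAlgebra ℚ (Matrix (Fin Ny × Fin Nx) (Fin Ny × Fin Nx) ℝ) :=
    Matrix.linftyOpNormedAlgebra
  exact (map_exp (kronLeft Ny Nx)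
    ((kronLeft Ny Nx).toLinearMap.continuous_of_finiteDimensional) M).symm

end Aux


lemma mulVec_kron {Nx Ny : ℕ} (B : Matrix (Fin Ny) (Fin Ny) ℝ) (C : Matrix (Fin Nx) (Fin Nx) ℝ)
    (W : Matrix (Fin Nx) (Fin Ny) ℝ) :
    (B ⊗ₖ C).mulVec (_root_.vec W) = _root_.vec (C * W * Bᵀ) := by
  funext p
  obtain ⟨j, i⟩ := p
  simp only [_root_.vec, Matrix.mulVec, dotProduct, Matrix.mul_apply, Matrix.transpose_apply,
    Fintype.sum_prod_type, Matrix.kroneckerMap_apply, Finset.sum_mul, Finset.mul_sum]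
  exact Finset.sum_congr rfl fun a _ => Finset.sum_congr rfl fun b _ => by ring

lemma vec_add {Nx Ny : ℕ} (U V : Matrix (Fin Nx) (Fin Ny) ℝ) :
    _root_.vec (U + V) = _root_.vec U + _root_.vec V := rfl

lemma mulVec_A {Nx Ny : ℕ} (T1 : Matrix (Fin Nx) (Fin Nx) ℝ) (T2 : Matrix (Fin Ny) (Fin Ny) ℝ)
    (W : Matrix (Fin Nx) (Fin Ny) ℝ) :
    ((1 : Matrix (Fin Ny) (Fin Ny) ℝ) ⊗ₖ T1 + T2ᵀ ⊗ₖ (1 : Matrix (Fin Nx) (Fin Nx) ℝ)).mulVec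
      (_root_.vec W) = _root_.vec (T1 * W + W * T2) := by
  rw [Matrix.add_mulVec, mulVec_kron, mulVec_kron, vec_add, Matrix.transpose_one,
    Matrix.mul_one, Matrix.transpose_transpose, Matrix.one_mul]

lemma vec_sub {Nx Ny : ℕ} (U V : Matrix (Fin Nx) (Fin Ny) ℝ) :
    _root_.vec (U - V) = _root_.vec U - _root_.vec V := rfl

/-- With `A = I ⊗ T1 + T2ᵀ ⊗ I` invertible, `E1 = exp(h_t T1)`, `E2 = exp(h_t T2ᵀ)`,
and `V_n` a solution of the Sylvester equation `T1 V_n + V_n T2 = E1 F_n E2ᵀ − F_n`,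
the exponential Euler step `u_{n+1} = exp(h_t A) u_n + A⁻¹(exp(h_t A) f_n − f_n)`
satisfies `u_{n+1} = vec(E1 U_n E2ᵀ + V_n)`. -/
theorem expEuler_step_matrix_form {Nx Ny : ℕ}
    (T1 : Matrix (Fin Nx) (Fin Nx) ℝ) (T2 : Matrix (Fin Ny) (Fin Ny) ℝ)
    (A : Matrix (Fin Ny × Fin Nx) (Fin Ny × Fin Nx) ℝ)
    (hA : A = (1 : Matrix (Fin Ny) (Fin Ny) ℝ) ⊗ₖ T1 + T2ᵀ ⊗ₖ (1 : Matrix (Fin Nx) (Fin Nx) ℝ))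
    (hAinv : IsUnit A.det) (ht : ℝ)
    (E1 : Matrix (Fin Nx) (Fin Nx) ℝ) (hE1 : E1 = exp (ht • T1))
    (E2 : Matrix (Fin Ny) (Fin Ny) ℝ) (hE2 : E2 = exp (ht • T2ᵀ))
    (Un Fn Vn : Matrix (Fin Nx) (Fin Ny) ℝ)
    (un fn : Fin Ny × Fin Nx → ℝ) (hun : un = _root_.vec Un) (hfn : fn = _root_.vec Fn)
    (hVn : T1 * Vn + Vn * T2 = E1 * Fn * E2ᵀ - Fn)
    (unp1 : Fin Ny × Fin Nx → ℝ)
    (hstep : unp1 = (exp (ht • A)).mulVec un + A⁻¹.mulVec ((exp (ht • A)).mulVec fn - fn)) :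
    unp1 = _root_.vec (E1 * Un * E2ᵀ + Vn) := by
  have hsmul : ht • A = (1 : Matrix (Fin Ny) (Fin Ny) ℝ) ⊗ₖ (ht • T1)
      + (ht • T2ᵀ) ⊗ₖ (1 : Matrix (Fin Nx) (Fin Nx) ℝ) := by
    rw [hA, smul_add, Matrix.kronecker_smul, Matrix.smul_kronecker]
  have hcomm : Commute ((1 : Matrix (Fin Ny) (Fin Ny) ℝ) ⊗ₖ (ht • T1))
      ((ht • T2ᵀ) ⊗ₖ (1 : Matrix (Fin Nx) (Fin Nx) ℝ)) := by
    unfold Commute SemiconjBy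
    rw [← Matrix.mul_kronecker_mul, ← Matrix.mul_kronecker_mul, Matrix.one_mul, Matrix.mul_one,
      Matrix.one_mul, Matrix.mul_one]
  have hexpA : exp (ht • A) = E2 ⊗ₖ E1 := by
    rw [hsmul, Matrix.exp_add_of_commute _ _ hcomm, exp_kronRight, exp_kronLeft,
      ← Matrix.mul_kronecker_mul, Matrix.one_mul, Matrix.mul_one, hE1, hE2]
  have hAv : A.mulVec (_root_.vec Vn) = (E2 ⊗ₖ E1).mulVec (_root_.vec Fn) - _root_.vec Fn := by
    rw [hA, mulVec_A, hVn, mulVec_kron, ← vec_sub]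
  rw [hstep, hexpA, hun, hfn, mulVec_kron, ← hAv, Matrix.mulVec_mulVec,
    Matrix.nonsing_inv_mul A hAinv, Matrix.one_mulVec, ← vec_add]
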